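/- arXiv:1401.1609 — 2 statements merged into one kernel-verified Lean document; each statement's English description precedes it below -/
import Mathlib

section
/- (Lemma 4.2, isotropic case) Assume W is isotropic so that Q₃(F) = μ|sym F|² + λ|tr F|². Then M_A = (μ/2)|A^{−1}e₃|² Id₃ + (λ + μ/2)(A^{−1}e₃ ⊗ A^{−1}e₃), and, denoting D = A^{−1}F*₂ₓ₂A^{−1} and d = A^{−1}e₃, for every symmetric F₂ₓ₂ ∈ ℝ^{2×2}: Q₂(x', F₂ₓ₂) = μ( |D|² − 2|Dd|²/|d|² + ⟨Dd, d⟩²/|d|⁴ ) + (λμ/(λ+μ))( tr D − ⟨Dd, d⟩/|d|² )². -/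
open MeasureTheory Filter
open scoped Matrix Topology

noncomputable section

attribute [local instance] Matrix.frobeniusNormedAddCommGroup Matrix.frobeniusNormedSpace

abbrev V2 : Type := Fin 2 → ℝ
abbrev V3 : Type := Fin 3 → ℝ
abbrev M3 : Type := Matrix (Fin 3) (Fin 3) ℝ
abbrev M2 : Type := Matrix (Fin 2) (Fin 2) ℝ
abbrev M32 : Type := Matrix (Fin 3) (Fin 2) ℝ

/-- The special orthogonal group `SO(3)` as a set of `3 × 3` matrices. -/
def SO3 : Set M3 := {R | R.transpose * R = 1 ∧ R.det = 1}

/-- The principal `2 × 2` minor of a `3 × 3` matrix. -/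
def sub2 (F : M3) : M2 := Matrix.of fun i j => F i.castSucc j.castSucc

/-- The `3 × 3` matrix with principal `2 × 2` minor equal to `F` and all other entries `0`. -/
def ext2 (F : M2) : M3 :=
  Matrix.of fun i j =>
    if hi : (i : ℕ) < 2 then (if hj : (j : ℕ) < 2 then F ⟨i, hi⟩ ⟨j, hj⟩ else 0) else 0

/-- Symmetric part of a `3 × 3` matrix. -/
def symM (F : M3) : M3 := (1/2 : ℝ) • (F + F.transpose)

/-- Symmetric part of a `2 × 2` matrix. -/
def symM2 (F : M2) : M2 := (1/2 : ℝ) • (F + F.transpose)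

/-- The third coordinate vector `e₃`. -/
def e3 : V3 := Pi.single 2 1

/-- The thin plate `Ω^h = Ω × (-h/2, h/2)`. -/
def cyl (Ω : Set V2) (h : ℝ) : Set V3 :=
  {x | ![x 0, x 1] ∈ Ω ∧ x 2 ∈ Set.Ioo (-(h/2)) (h/2)}

/-- The gradient of a map `ℝ² → ℝ³`, as a `3 × 2` matrix field. -/
def grad32 (y : V2 → V3) (x : V2) : M32 :=
  Matrix.of fun i j => fderiv ℝ y x (Pi.single j 1) i

/-- The gradient of a map `ℝ³ → ℝ³`, as a `3 × 3` matrix field. -/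
def grad33 (u : V3 → V3) (x : V3) : M3 :=
  Matrix.of fun i j => fderiv ℝ u x (Pi.single j 1) i

/-- The Euclidean norm on `ℝ³`. -/
def enorm3 (v : V3) : ℝ := Real.sqrt (∑ i, (v i)^2)

/-- The unit normal `N = ∂₁y × ∂₂y / |∂₁y × ∂₂y|` to the surface `y(Ω)`. -/
def normalVec (y : V2 → V3) (x : V2) : V3 :=
  (enorm3 (crossProduct (fun i => grad32 y x i 0) (fun i => grad32 y x i 1)))⁻¹ •
    crossProduct (fun i => grad32 y x i 0) (fun i => grad32 y x i 1)

/-- The Cosserat vector `b = (∇y)(G₂ₓ₂)⁻¹(G₁₃,G₂₃)ᵀ + (√det G/√det G₂ₓ₂) N`. -/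
def cosserat (G : V2 → M3) (y : V2 → V3) (x : V2) : V3 :=
  (grad32 y x).mulVec ((sub2 (G x))⁻¹.mulVec ![G x 0 2, G x 1 2]) +
    (Real.sqrt (G x).det / Real.sqrt (sub2 (G x)).det) • normalVec y x

/-- The non-Euclidean elastic energy `E^h(u) = (1/h) ∫_{Ω^h} W(∇u A⁻¹)`. -/
def energy (W : M3 → ℝ) (A : V2 → M3) (Ω : Set V2) (h : ℝ) (u : V3 → V3) : ℝ :=
  (1/h) * ∫ x in cyl Ω h, W (grad33 u x * (A ![x 0, x 1])⁻¹)

/-- The quadratic form `Q₃(F) = D²W(Id)(F,F)`. -/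
def Q3 (W : M3 → ℝ) (F : M3) : ℝ := iteratedFDeriv ℝ 2 W 1 ![F, F]

/-- The reduced quadratic form
`Q₂(A, F₂ₓ₂) = min { Q₃(A⁻¹ F̃ A⁻¹) : F̃ ∈ ℝ³ˣ³, F̃₂ₓ₂ = F₂ₓ₂ }` (here `A = √G(x')`). -/
def Q2 (W : M3 → ℝ) (A : M3) (F2 : M2) : ℝ :=
  sInf {q | ∃ Ft : M3, sub2 Ft = F2 ∧ q = Q3 W (A⁻¹ * Ft * A⁻¹)}

/-- The limiting Kirchhoff-type bending functional
`I_G(y) = (1/24) ∫_Ω Q₂(x', (∇y)ᵀ ∇b) dx'`. -/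
def IG (W : M3 → ℝ) (G : V2 → M3) (A : V2 → M3) (Ω : Set V2) (y : V2 → V3) : ℝ :=
  (1/24) * ∫ x in Ω, Q2 W (A x) ((grad32 y x).transpose * grad32 (cosserat G y) x)

/-- Membership in `W^{1,2}(U, E)`: the map and its gradient are square integrable on `U`. -/
def MemW12 {k : ℕ} {E : Type} [NormedAddCommGroup E] [NormedSpace ℝ E]
    (U : Set (Fin k → ℝ)) (u : (Fin k → ℝ) → E) : Prop :=
  MemLp u 2 (volume.restrict U) ∧ MemLp (fun x => fderiv ℝ u x) 2 (volume.restrict U)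

/-- Membership in `W^{2,2}(U, E)`. -/
def MemW22 {k : ℕ} {E : Type} [NormedAddCommGroup E] [NormedSpace ℝ E]
    (U : Set (Fin k → ℝ)) (u : (Fin k → ℝ) → E) : Prop :=
  MemW12 U u ∧ MemLp (fun x => fderiv ℝ (fderiv ℝ u) x) 2 (volume.restrict U)

/-- Strong convergence in `W^{1,2}(U, E)` of a sequence of maps. -/
def TendstoW12 {k : ℕ} {E : Type} [NormedAddCommGroup E] [NormedSpace ℝ E]
    (U : Set (Fin k → ℝ)) (f : ℕ → (Fin k → ℝ) → E) (g : (Fin k → ℝ) → E) : Prop :=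
  Tendsto (fun n => ∫ x in U, (‖f n x - g x‖^2 + ‖fderiv ℝ (f n) x - fderiv ℝ g x‖^2))
    atTop (𝓝 0)

/-- Admissible stored-energy density: `C²` near `SO(3)`, nonnegative, frame indifferent,
vanishing on `SO(3)`, and nondegenerate. -/
def isAdmissibleW (W : M3 → ℝ) : Prop :=
  (∃ U : Set M3, IsOpen U ∧ SO3 ⊆ U ∧ ContDiffOn ℝ 2 W U) ∧
  (∀ F, 0 ≤ W F) ∧ (∀ R ∈ SO3, W R = 0) ∧
  (∀ R ∈ SO3, ∀ F, W (R * F) = W F) ∧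
  (∃ c > 0, ∀ F, c * (Metric.infDist F SO3)^2 ≤ W F)

/-- `G` is a smooth field of symmetric positive definite matrices on `Ω̄`. -/
def isMetricOn (Ω : Set V2) (G : V2 → M3) : Prop :=
  (∀ i j, ContDiffOn ℝ (⊤ : ℕ∞) (fun x => G x i j) (closure Ω)) ∧
  (∀ x ∈ closure Ω, (G x).IsSymm ∧ (G x).PosDef)

/-- `A` is the symmetric positive definite square root of `G` on `Ω̄`. -/
def isSqrtOn (Ω : Set V2) (G A : V2 → M3) : Prop :=
  ∀ x ∈ closure Ω, (A x).IsSymm ∧ (A x).PosDef ∧ A x * A x = G x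

/-- `Ω` has smooth boundary: near each boundary point, `Ω` is the sublevel set of a smooth
function with nonvanishing gradient. -/
def HasSmoothBoundary (Ω : Set V2) : Prop :=
  ∀ p ∈ frontier Ω, ∃ (U : Set V2) (f : V2 → ℝ), IsOpen U ∧ p ∈ U ∧
    ContDiff ℝ (⊤ : ℕ∞) f ∧ (∀ q ∈ U, (q ∈ Ω ↔ f q < 0)) ∧
    ∀ q ∈ U, f q = 0 → fderiv ℝ f q ≠ 0

/-- `y` is a `W^{2,2}` isometric immersion of the midplate metric `G₂ₓ₂`. -/
def IsIsometricImmersion (Ω : Set V2) (G : V2 → M3) (y : V2 → V3) : Prop :=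
  MemW22 Ω y ∧
  ∀ᵐ x ∂(volume.restrict Ω), (grad32 y x).transpose * grad32 y x = sub2 (G x)

/-- The infimum of `E^h` over `W^{1,2}` deformations. -/
def infEnergy (W : M3 → ℝ) (A : V2 → M3) (Ω : Set V2) (h : ℝ) : ℝ :=
  sInf {e | ∃ u : V3 → V3, MemW12 (cyl Ω h) u ∧ e = energy W A Ω h u}

/-- Partial derivative `∂_j f` of a scalar function on `ℝ²`. -/
def pdv (j : Fin 2) (f : V2 → ℝ) (x : V2) : ℝ := fderiv ℝ f x (Pi.single j 1)

/-- Partial derivative with three-dimensional index: `∂₃ = 0` since fields are independent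
of `x₃`. -/
def pd3 (j : Fin 3) (f : V2 → ℝ) (x : V2) : ℝ :=
  if h : (j : ℕ) < 2 then pdv ⟨j, h⟩ f x else 0

/-- Second partial derivative `∂_i ∂_j f`. -/
def secondpd (i j : Fin 2) (f : V2 → ℝ) (x : V2) : ℝ := pdv i (pdv j f) x

/-- Gradient of a scalar function on `ℝ²`. -/
def gradV2 (f : V2 → ℝ) (x : V2) : V2 := fun i => pdv i f x

/-- Hessian of a scalar function on `ℝ²`. -/
def hess2 (f : V2 → ℝ) (x : V2) : M2 := Matrix.of fun i j => secondpd i j f x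

/-- Christoffel symbols `Γ^i_{kl}` of the (thickness-independent) metric `G`. -/
def christoffel (G : V2 → M3) (i k l : Fin 3) (x : V2) : ℝ :=
  (1/2) * ∑ m : Fin 3, (G x)⁻¹ i m *
    (pd3 l (fun z => G z m k) x + pd3 k (fun z => G z m l) x - pd3 m (fun z => G z k l) x)

/-- Riemann curvatures `R^s_{ijk}` of the metric `G`. -/
def riemann (G : V2 → M3) (s i j k : Fin 3) (x : V2) : ℝ :=
  pd3 j (christoffel G s i k) x - pd3 k (christoffel G s i j) x +
    ∑ m : Fin 3, (christoffel G s j m x * christoffel G m i k x -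
      christoffel G s k m x * christoffel G m i j x)

/-- Covariant Riemann curvatures `R_{sijk} = Σ_m G_{sm} R^m_{ijk}`. -/
def riemannLow (G : V2 → M3) (s i j k : Fin 3) (x : V2) : ℝ :=
  ∑ m : Fin 3, G x s m * riemann G m i j k x

/-- Christoffel symbols of a two-dimensional metric `g`. -/
def christoffel2 (g : V2 → M2) (i k l : Fin 2) (x : V2) : ℝ :=
  (1/2) * ∑ m : Fin 2, (g x)⁻¹ i m *
    (pdv l (fun z => g z m k) x + pdv k (fun z => g z m l) x - pdv m (fun z => g z k l) x)

/-- Riemann curvatures of a two-dimensional metric `g`. -/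
def riemann2 (g : V2 → M2) (s i j k : Fin 2) (x : V2) : ℝ :=
  pdv j (christoffel2 g s i k) x - pdv k (christoffel2 g s i j) x +
    ∑ m : Fin 2, (christoffel2 g s j m x * christoffel2 g m i k x -
      christoffel2 g s k m x * christoffel2 g m i j x)

/-- Gaussian curvature `κ(g) = R_{1212}/det g` of a two-dimensional metric `g`. -/
def gaussCurv (g : V2 → M2) (x : V2) : ℝ :=
  (∑ m : Fin 2, g x 0 m * riemann2 g m 1 0 1 x) / (g x).det

/-- `curlᵀ curl F = ∂₂₂F₁₁ − 2∂₁₂F₁₂ + ∂₁₁F₂₂` of a symmetric `2 × 2` matrix field. -/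
def curlTcurl (F : V2 → M2) (x : V2) : ℝ :=
  secondpd 1 1 (fun z => F z 0 0) x - 2 * secondpd 0 1 (fun z => F z 0 1) x +
    secondpd 0 0 (fun z => F z 1 1) x

/-- Second fundamental form `Π = (∇y)ᵀ ∇N` of the surface `y(Ω)`. -/
def secondFF (y : V2 → V3) (x : V2) : M2 :=
  (grad32 y x).transpose * grad32 (normalVec y) x

/-- The `3 × 3` matrix `Q = [∂₁y, ∂₂y, b]`. -/
def Qmat3 (y : V2 → V3) (b : V2 → V3) (x : V2) : M3 :=
  Matrix.of fun i j => ![grad32 y x i 0, grad32 y x i 1, b x i] j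

/-- The isotropic reduced quadratic form `Q⁰₂,iso(F) = μ|sym F|² + (λμ/(λ+μ))(tr F)²`. -/
def Q2iso (mu la : ℝ) (F : M2) : ℝ :=
  mu * ‖symM2 F‖^2 + (la * mu / (la + mu)) * (F.trace)^2


lemma frob_sq (M : M3) : ‖M‖^2 = ∑ i, ∑ j, (M i j)^2 := by
  have h : ∀ i j : Fin 3, ‖M i j‖ ^ (2:ℝ) = (M i j)^2 := fun i j => by
    rw [show (2:ℝ) = ((2:ℕ):ℝ) by norm_num, Real.rpow_natCast]
    simp [Real.norm_eq_abs, sq_abs]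
  rw [Matrix.frobenius_norm_def]
  simp_rw [h]
  rw [← Real.rpow_natCast _ 2, ← Real.rpow_mul (by positivity)]
  norm_num

lemma mul_vecMulVec_mul (M N : M3) (u v : V3) :
    M * Matrix.vecMulVec u v * N = Matrix.vecMulVec (M.mulVec u) (Matrix.vecMul v N) := by
  ext i j
  simp [Matrix.mul_apply, Matrix.vecMulVec_apply, Matrix.mulVec, Matrix.vecMul,
    dotProduct, Fin.sum_univ_three]
  ring

lemma g_eval (mu la : ℝ) (D : M3) (hD : D.IsSymm) (dd c : V3) :
    mu * ‖symM (D + Matrix.vecMulVec c dd)‖^2 + la * ((D + Matrix.vecMulVec c dd).trace)^2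
    = mu * (‖D‖^2 + 2 * (c ⬝ᵥ D.mulVec dd) + ((c ⬝ᵥ c) * (dd ⬝ᵥ dd) + (c ⬝ᵥ dd)^2)/2)
      + la * (D.trace + c ⬝ᵥ dd)^2 := by
  have h10 : D 1 0 = D 0 1 := hD.apply 0 1
  have h20 : D 2 0 = D 0 2 := hD.apply 0 2
  have h21 : D 2 1 = D 1 2 := hD.apply 1 2
  simp only [frob_sq, symM, Matrix.trace, Matrix.diag, Matrix.smul_apply, Matrix.add_apply,
    Matrix.transpose_apply, Matrix.vecMulVec_apply, Matrix.mulVec, dotProduct,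
    Fin.sum_univ_three, smul_eq_mul]
  rw [h10, h20, h21]
  ring

lemma symM_reduce (D : M3) (a b dd : V3) :
    symM (D + Matrix.vecMulVec a dd + Matrix.vecMulVec dd b) =
      symM (D + Matrix.vecMulVec (a + b) dd) := by
  ext i j
  simp [symM, Matrix.add_apply, Matrix.transpose_apply, Matrix.vecMulVec_apply, Pi.add_apply,
    smul_eq_mul]
  ring

lemma trace_reduce (D : M3) (a b dd : V3) :
    (D + Matrix.vecMulVec a dd + Matrix.vecMulVec dd b).trace =
      (D + Matrix.vecMulVec (a + b) dd).trace := by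
  simp [Matrix.trace, Matrix.diag, Matrix.add_apply, Matrix.vecMulVec_apply, Pi.add_apply,
    Fin.sum_univ_three]
  ring

lemma scalar_id (mu la n t P q0 nD v1 v2 v3 β : ℝ) (hn : n ≠ 0) (hml : mu + la ≠ 0)
    (hb : β = ((mu+2*la)*(q0/n) - la*t)/((mu+la)*n)) :
    mu * (nD + 2*((-2/n)*P + β*q0 + v1)
        + ((((-2/n)^2*P + 2*((-2/n))*β*q0 + β^2*n + 2*((-2/n))*v1 + 2*β*v2 + v3))*n
          + ((-2/n)*q0 + β*n + v2)^2)/2)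
      + la*(t + ((-2/n)*q0 + β*n + v2))^2
    = (mu*(nD - 2*P/n + (q0/n)^2) + (la*mu/(la+mu))*(t - q0/n)^2)
      + ((mu/2)*(v3*n + v2^2) + la*v2^2) := by
  subst hb
  have hml2 : la + mu ≠ 0 := by rwa [add_comm]
  field_simp
  ring

/-- **Lemma 4.2** (isotropic case): the explicit form of `M_A` and of `Q₂` when
`Q₃(F) = μ|sym F|² + λ|tr F|²`. -/
theorem Q2_isotropic_formula
    (W : M3 → ℝ) (hW : isAdmissibleW W)
    (mu la : ℝ) (hmu : 0 < mu) (hla : 0 ≤ la)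
    (hQ3 : ∀ F : M3, Q3 W F = mu * ‖symM F‖^2 + la * (Matrix.trace F)^2)
    (L3 : M3 → M3) (hL3 : ∀ F : M3, L3 F = mu • symM F + (la * Matrix.trace F) • (1 : M3))
    (A : M3) (hAsymm : A.IsSymm) (hApos : A.PosDef)
    (MA : M3)
    (hMA : ∀ i : Fin 3, MA.mulVec (Pi.single i 1) =
      (L3 (Matrix.vecMulVec (Pi.single i 1) (A⁻¹.mulVec e3))).mulVec (A⁻¹.mulVec e3))
    (F2 : M2) (hF2 : F2.IsSymm) :
    let d : V3 := A⁻¹.mulVec e3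
    let D : M3 := A⁻¹ * ext2 F2 * A⁻¹
    MA = ((mu/2) * dotProduct d d) • (1 : M3) +
        (la + mu/2) • Matrix.vecMulVec d d ∧
    Q2 W A F2 =
      mu * (‖D‖^2 - 2 * dotProduct (D.mulVec d) (D.mulVec d) / dotProduct d d
        + (dotProduct (D.mulVec d) d)^2 / (dotProduct d d)^2) +
      (la * mu / (la + mu)) *
        (Matrix.trace D - dotProduct (D.mulVec d) d / dotProduct d d)^2 := by
  intro d D
  have hAdet : IsUnit A.det := isUnit_iff_ne_zero.mpr hApos.det_pos.ne'
  have hBA : A⁻¹ * A = 1 := Matrix.nonsing_inv_mul A hAdet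
  have hAB : A * A⁻¹ = 1 := Matrix.mul_nonsing_inv A hAdet
  have hB : A⁻¹ᵀ = A⁻¹ := by rw [Matrix.transpose_nonsing_inv, show Aᵀ = A from hAsymm]
  have hd3 : A⁻¹ *ᵥ e3 = d := rfl
  have hD0 : A⁻¹ * ext2 F2 * A⁻¹ = D := rfl
  constructor
  · -- formula for M_A
    ext i j
    have h := congrFun (hMA j) i
    rw [hL3] at h
    simp only [Matrix.mulVec_single_one, Matrix.col_apply, mul_one] at h
    rw [h, hd3]
    fin_cases i <;> fin_cases j <;>
      simp [symM, Matrix.mulVec, dotProduct, Matrix.vecMulVec_apply, Matrix.add_apply,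
        Matrix.smul_apply, Matrix.one_apply, Matrix.transpose_apply, Matrix.trace, Matrix.diag,
        Fin.sum_univ_three, Pi.single_apply, smul_eq_mul] <;> ring
  · -- formula for Q2
    have hext2 : (ext2 F2)ᵀ = ext2 F2 := by
      ext i j
      fin_cases i <;> fin_cases j <;>
        simp [ext2, Matrix.transpose_apply] <;>
        first | rfl | exact hF2.apply _ _
    have hDsymm : D.IsSymm := by
      show Dᵀ = D
      rw [← hD0]
      simp [Matrix.transpose_mul, hext2, hB, Matrix.mul_assoc]
    have hdne : d ≠ 0 := by
      intro h0
      have h1 : A *ᵥ d = e3 := by rw [← hd3, Matrix.mulVec_mulVec, hAB, Matrix.one_mulVec]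
      rw [h0, Matrix.mulVec_zero] at h1
      have h2 := congrFun h1 2
      simp [e3] at h2
    have hn : 0 < d ⬝ᵥ d := by
      have h0 : d ⬝ᵥ d ≠ 0 := fun h => hdne (dotProduct_self_eq_zero.mp h)
      have h1 : 0 ≤ d ⬝ᵥ d := Finset.sum_nonneg fun i _ => mul_self_nonneg _
      exact lt_of_le_of_ne h1 (Ne.symm h0)
    have hml : mu + la ≠ 0 := by positivity
    obtain ⟨β, hbeta⟩ : ∃ β : ℝ,
        β = ((mu+2*la)*(((D *ᵥ d) ⬝ᵥ d)/(d ⬝ᵥ d)) - la*D.trace)/((mu+la)*(d ⬝ᵥ d)) := ⟨_, rfl⟩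
    obtain ⟨cstar, hcstar⟩ : ∃ c : V3, c = (-2/(d ⬝ᵥ d)) • (D *ᵥ d) + β • d := ⟨_, rfl⟩
    have hvm : ∀ v : V3, Matrix.vecMul v A⁻¹ = A⁻¹ *ᵥ v := fun v => by
      conv_lhs => rw [← hB]
      rw [Matrix.vecMul_transpose]
    have key : ∀ c : V3,
        mu * ‖symM (D + Matrix.vecMulVec c d)‖^2 + la * ((D + Matrix.vecMulVec c d).trace)^2
        = (mu*(‖D‖^2 - 2*((D *ᵥ d) ⬝ᵥ (D *ᵥ d))/(d ⬝ᵥ d) + (((D *ᵥ d) ⬝ᵥ d)/(d ⬝ᵥ d))^2)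
            + (la*mu/(la+mu))*(D.trace - ((D *ᵥ d) ⬝ᵥ d)/(d ⬝ᵥ d))^2)
          + ((mu/2)*(((c - cstar) ⬝ᵥ (c - cstar))*(d ⬝ᵥ d) + ((c - cstar) ⬝ᵥ d)^2)
            + la*((c - cstar) ⬝ᵥ d)^2) := by
      intro c
      rw [g_eval mu la D hDsymm d c]
      have h1 : c ⬝ᵥ (D *ᵥ d) = (-2/(d ⬝ᵥ d))*((D *ᵥ d) ⬝ᵥ (D *ᵥ d)) + β*((D *ᵥ d) ⬝ᵥ d)
          + ((c - cstar) ⬝ᵥ (D *ᵥ d)) := by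
        rw [hcstar]
        simp [dotProduct, Fin.sum_univ_three, Pi.add_apply, Pi.sub_apply, Pi.smul_apply,
          smul_eq_mul]
        ring
      have h2 : c ⬝ᵥ d = (-2/(d ⬝ᵥ d))*((D *ᵥ d) ⬝ᵥ d) + β*(d ⬝ᵥ d) + ((c - cstar) ⬝ᵥ d) := by
        rw [hcstar]
        simp [dotProduct, Fin.sum_univ_three, Pi.add_apply, Pi.sub_apply, Pi.smul_apply,
          smul_eq_mul]
        ring
      have h3 : c ⬝ᵥ c = (-2/(d ⬝ᵥ d))^2*((D *ᵥ d) ⬝ᵥ (D *ᵥ d))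
          + 2*((-2/(d ⬝ᵥ d)))*β*((D *ᵥ d) ⬝ᵥ d) + β^2*(d ⬝ᵥ d)
          + 2*((-2/(d ⬝ᵥ d)))*((c - cstar) ⬝ᵥ (D *ᵥ d)) + 2*β*((c - cstar) ⬝ᵥ d)
          + ((c - cstar) ⬝ᵥ (c - cstar)) := by
        rw [hcstar]
        simp [dotProduct, Fin.sum_univ_three, Pi.add_apply, Pi.sub_apply, Pi.smul_apply,
          smul_eq_mul]
        ring
      rw [h1, h2, h3]
      exact scalar_id mu la (d ⬝ᵥ d) D.trace ((D *ᵥ d) ⬝ᵥ (D *ᵥ d)) ((D *ᵥ d) ⬝ᵥ d) (‖D‖^2)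
        ((c - cstar) ⬝ᵥ (D *ᵥ d)) ((c - cstar) ⬝ᵥ d) ((c - cstar) ⬝ᵥ (c - cstar)) β
        hn.ne' hml hbeta
    have hexp : A⁻¹ * (ext2 F2 + Matrix.vecMulVec (A *ᵥ cstar) e3) * A⁻¹
        = D + Matrix.vecMulVec cstar d := by
      rw [Matrix.mul_add, Matrix.add_mul, mul_vecMulVec_mul, Matrix.mulVec_mulVec, hBA,
        Matrix.one_mulVec, hvm, hd3, hD0]
    have hsub : sub2 (ext2 F2 + Matrix.vecMulVec (A *ᵥ cstar) e3) = F2 := by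
      ext i j
      fin_cases i <;> fin_cases j <;>
        simp [sub2, ext2, e3, Matrix.add_apply, Matrix.vecMulVec_apply, Pi.single_apply]
    have hleast : IsLeast {q | ∃ Ft : M3, sub2 Ft = F2 ∧ q = Q3 W (A⁻¹ * Ft * A⁻¹)}
        (mu*(‖D‖^2 - 2*((D *ᵥ d) ⬝ᵥ (D *ᵥ d))/(d ⬝ᵥ d) + (((D *ᵥ d) ⬝ᵥ d)/(d ⬝ᵥ d))^2)
          + (la*mu/(la+mu))*(D.trace - ((D *ᵥ d) ⬝ᵥ d)/(d ⬝ᵥ d))^2) := by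
      constructor
      · refine ⟨ext2 F2 + Matrix.vecMulVec (A *ᵥ cstar) e3, hsub, ?_⟩
        rw [hexp, hQ3, key cstar, sub_self]
        simp
      · rintro x ⟨Ft, hFt, rfl⟩
        have h00 := congrFun (congrFun hFt 0) 0
        have h01 := congrFun (congrFun hFt 0) 1
        have h10 := congrFun (congrFun hFt 1) 0
        have h11 := congrFun (congrFun hFt 1) 1
        simp [sub2] at h00 h01 h10 h11
        have hdecomp : Ft = ext2 F2 + Matrix.vecMulVec (fun i => Ft i 2) e3
            + Matrix.vecMulVec e3 ![Ft 2 0, Ft 2 1, 0] := by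
          ext i j
          fin_cases i <;> fin_cases j <;>
            simp [ext2, e3, Matrix.vecMulVec_apply, Matrix.add_apply, Pi.single_apply,
              h00, h01, h10, h11]
        have hexp2 : A⁻¹ * Ft * A⁻¹ = D + Matrix.vecMulVec (A⁻¹ *ᵥ (fun i => Ft i 2)) d
            + Matrix.vecMulVec d (A⁻¹ *ᵥ ![Ft 2 0, Ft 2 1, 0]) := by
          conv_lhs => rw [hdecomp]
          rw [Matrix.mul_add, Matrix.mul_add, Matrix.add_mul, Matrix.add_mul,
            mul_vecMulVec_mul, mul_vecMulVec_mul, hvm, hvm, hd3, hD0]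
        rw [hQ3, hexp2, symM_reduce, trace_reduce,
          key (A⁻¹ *ᵥ (fun i => Ft i 2) + A⁻¹ *ᵥ ![Ft 2 0, Ft 2 1, 0])]
        refine le_add_of_nonneg_right ?_
        have h1 : 0 ≤ ((A⁻¹ *ᵥ (fun i => Ft i 2) + A⁻¹ *ᵥ ![Ft 2 0, Ft 2 1, 0]) - cstar) ⬝ᵥ
            ((A⁻¹ *ᵥ (fun i => Ft i 2) + A⁻¹ *ᵥ ![Ft 2 0, Ft 2 1, 0]) - cstar) :=
          Finset.sum_nonneg fun i _ => mul_self_nonneg _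
        have h2 : 0 ≤ (((A⁻¹ *ᵥ (fun i => Ft i 2) + A⁻¹ *ᵥ ![Ft 2 0, Ft 2 1, 0]) - cstar) ⬝ᵥ d)^2 :=
          sq_nonneg _
        have h3 := mul_nonneg h1 hn.le
        have h4 := mul_nonneg hla h2
        nlinarith
    show sInf {q | ∃ Ft : M3, sub2 Ft = F2 ∧ q = Q3 W (A⁻¹ * Ft * A⁻¹)} = _
    rw [hleast.csInf_eq, div_pow]
end
end

section
/- (Theorem 4.3) Assume W is isotropic so that Q₃(F) = μ|sym F|² + λ|tr F|². Then for every x' ∈ Ω and every symmetric F₂ₓ₂ ∈ ℝ^{2×2}: Q₂(x', F₂ₓ₂) = μ|√(G₂ₓ₂)^{−1} F₂ₓ₂ √(G₂ₓ₂)^{−1}|² + (λμ/(λ+μ))|tr(√(G₂ₓ₂)^{−1} F₂ₓ₂ √(G₂ₓ₂)^{−1})|², i.e. Q₂(x', F₂ₓ₂) = Q⁰₂,iso(√(G₂ₓ₂)^{−1} F₂ₓ₂ √(G₂ₓ₂)^{−1}). -/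
open MeasureTheory Filter
open scoped Matrix Topology

noncomputable section

attribute [local instance] Matrix.frobeniusNormedAddCommGroup Matrix.frobeniusNormedSpace

section AuxQ2
open Matrix

def Jq : M32 := Matrix.of fun i j => if (i : ℕ) = (j : ℕ) then 1 else 0
def Eq3 : M3 := Matrix.of fun i j => if i = 2 ∧ j = 2 then 1 else 0

lemma Eq3_transpose : Eq3ᵀ = Eq3 := by
  ext i j; simp [Eq3, Matrix.transpose_apply, and_comm]

lemma JtJ : Jqᵀ * Jq = (1 : M2) := by
  ext i j
  fin_cases i <;> fin_cases j <;>
    simp [Jq, Matrix.mul_apply, Fin.sum_univ_three, Matrix.one_apply]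

lemma JJt : Jq * Jqᵀ = (1 : M3) - Eq3 := by
  ext i j
  fin_cases i <;> fin_cases j <;>
    simp [Jq, Eq3, Matrix.mul_apply, Fin.sum_univ_two, Matrix.one_apply]

lemma EJ : Eq3 * Jq = 0 := by
  ext i j
  fin_cases i <;> fin_cases j <;>
    simp [Jq, Eq3, Matrix.mul_apply, Fin.sum_univ_three]

lemma JtE : Jqᵀ * Eq3 = 0 := by
  ext i j
  fin_cases i <;> fin_cases j <;>
    simp [Jq, Eq3, Matrix.mul_apply, Fin.sum_univ_three]

lemma sub2_eq (M : M3) : sub2 M = Jqᵀ * M * Jq := by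
  ext i j
  fin_cases i <;> fin_cases j <;>
    simp [sub2, Jq, Matrix.mul_apply, Fin.sum_univ_three, Fin.castSucc, Fin.castAdd, Fin.castLE]

lemma ext2_eq (F : M2) : ext2 F = Jq * F * Jqᵀ := by
  ext i j
  fin_cases i <;> fin_cases j <;>
    simp [ext2, Jq, Matrix.mul_apply, Fin.sum_univ_two]

lemma EME (M : M3) : Eq3 * M * Eq3 = (M 2 2) • Eq3 := by
  ext i j
  fin_cases i <;> fin_cases j <;>
    simp [Eq3, Matrix.mul_apply, Fin.sum_univ_three]

lemma trace_mul_E (M : M3) : (M * Eq3).trace = M 2 2 := by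
  simp [Matrix.trace, Matrix.mul_apply, Eq3, Fin.sum_univ_three, Matrix.diag]

lemma frob_sq_s8 {m n : Type} [Fintype m] [Fintype n] (X : Matrix m n ℝ) :
    ‖X‖^2 = (Xᵀ * X).trace := by
  have e1 : ∀ (x : ℝ), ‖x‖ ^ (2:ℝ) = x^2 := fun x => by
    rw [show (2:ℝ) = ((2:ℕ):ℝ) by norm_num, Real.rpow_natCast, Real.norm_eq_abs, sq_abs]
  rw [Matrix.frobenius_norm_def]
  simp_rw [e1]
  have h2 : (0:ℝ) ≤ ∑ i, ∑ j, (X i j)^2 := by positivity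
  rw [← Real.sqrt_eq_rpow, Real.sq_sqrt h2]
  simp only [Matrix.trace, Matrix.diag, Matrix.mul_apply, Matrix.transpose_apply, sq]
  exact Finset.sum_comm

lemma decompX (X : M3) (hX : Jqᵀ * X * Jq = 0) :
    X = Eq3 * X + X * Eq3 - (X 2 2) • Eq3 := by
  have h00 := congrFun (congrFun hX 0) 0
  have h01 := congrFun (congrFun hX 0) 1
  have h10 := congrFun (congrFun hX 1) 0
  have h11 := congrFun (congrFun hX 1) 1
  simp [Jq, Matrix.mul_apply, Fin.sum_univ_three] at h00 h01 h10 h11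
  ext i j
  fin_cases i <;> fin_cases j <;>
    simp [Eq3, Matrix.mul_apply, Fin.sum_univ_three, h00, h01, h10, h11]

lemma sub2_ext2 (F : M2) : sub2 (ext2 F) = F := by
  ext i j
  fin_cases i <;> fin_cases j <;> simp [sub2, ext2, Fin.castSucc, Fin.castAdd, Fin.castLE]

end AuxQ2

set_option maxHeartbeats 2000000 in
/-- **Theorem 4.3** (isotropic case): `Q₂(x', F₂ₓ₂) = Q⁰₂,iso(√G₂ₓ₂⁻¹ F₂ₓ₂ √G₂ₓ₂⁻¹)`. -/
theorem Q2_isotropic_via_sqrt_G2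
    (W : M3 → ℝ) (hW : isAdmissibleW W)
    (mu la : ℝ) (hmu : 0 < mu) (hla : 0 ≤ la)
    (hQ3 : ∀ F : M3, Q3 W F = mu * ‖symM F‖^2 + la * (Matrix.trace F)^2)
    (Gm : M3) (hGsymm : Gm.IsSymm) (hGpos : Gm.PosDef)
    (A : M3) (hAsymm : A.IsSymm) (hApos : A.PosDef) (hAA : A * A = Gm)
    (B2 : M2) (hBsymm : B2.IsSymm) (hBpos : B2.PosDef) (hBB : B2 * B2 = sub2 Gm)
    (F2 : M2) (hF2 : F2.IsSymm) :
    Q2 W A F2 =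
      mu * ‖B2⁻¹ * F2 * B2⁻¹‖^2 +
        (la * mu / (la + mu)) * (Matrix.trace (B2⁻¹ * F2 * B2⁻¹))^2 ∧
    Q2 W A F2 = Q2iso mu la (B2⁻¹ * F2 * B2⁻¹) := by
  classical
  have hlamu : 0 < la + mu := by linarith
  have hAT : Aᵀ = A := hAsymm
  have hBT : B2ᵀ = B2 := hBsymm
  have hAd : IsUnit A.det := hApos.det_pos.ne'.isUnit
  have hBd : IsUnit B2.det := hBpos.det_pos.ne'.isUnit
  have hAiA : A⁻¹ * A = 1 := Matrix.nonsing_inv_mul A hAd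
  have hAAi : A * A⁻¹ = 1 := Matrix.mul_nonsing_inv A hAd
  have hBiB : B2⁻¹ * B2 = 1 := Matrix.nonsing_inv_mul B2 hBd
  have hBBi : B2 * B2⁻¹ = 1 := Matrix.mul_nonsing_inv B2 hBd
  have hAiT : (A⁻¹)ᵀ = A⁻¹ := by rw [Matrix.transpose_nonsing_inv, hAT]
  have hBiT : (B2⁻¹)ᵀ = B2⁻¹ := by rw [Matrix.transpose_nonsing_inv, hBT]
  have hGiT : (Gm⁻¹)ᵀ = Gm⁻¹ := by rw [Matrix.transpose_nonsing_inv, hGsymm.eq]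
  have hGi : A⁻¹ * A⁻¹ = Gm⁻¹ := by rw [← Matrix.mul_inv_rev, hAA]
  have hAiAiX : ∀ (n : Type) [Fintype n] (X : Matrix (Fin 3) n ℝ),
      A⁻¹ * (A⁻¹ * X) = Gm⁻¹ * X := fun n _ X => by rw [← Matrix.mul_assoc, hGi]
  have hAiAX : ∀ (n : Type) [Fintype n] (X : Matrix (Fin 3) n ℝ),
      A⁻¹ * (A * X) = X := fun n _ X => by rw [← Matrix.mul_assoc, hAiA, Matrix.one_mul]
  have hAAiX : ∀ (n : Type) [Fintype n] (X : Matrix (Fin 3) n ℝ),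
      A * (A⁻¹ * X) = X := fun n _ X => by rw [← Matrix.mul_assoc, hAAi, Matrix.one_mul]
  have hEJX : ∀ (n : Type) [Fintype n] (X : Matrix (Fin 2) n ℝ),
      Eq3 * (Jq * X) = 0 := fun n _ X => by rw [← Matrix.mul_assoc, EJ, Matrix.zero_mul]
  have hJtEX : ∀ (n : Type) [Fintype n] (X : Matrix (Fin 3) n ℝ),
      Jqᵀ * (Eq3 * X) = 0 := fun n _ X => by rw [← Matrix.mul_assoc, JtE, Matrix.zero_mul]
  have hJtJX : ∀ (n : Type) [Fintype n] (X : Matrix (Fin 2) n ℝ),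
      Jqᵀ * (Jq * X) = X := fun n _ X => by rw [← Matrix.mul_assoc, JtJ, Matrix.one_mul]
  have hJJtX : ∀ (n : Type) [Fintype n] (X : Matrix (Fin 3) n ℝ),
      Jq * (Jqᵀ * X) = X - Eq3 * X := fun n _ X => by
    rw [← Matrix.mul_assoc, JJt, Matrix.sub_mul, Matrix.one_mul]
  -- gamma
  set γ : ℝ := Gm⁻¹ 2 2 with hγdef
  have hγpos : 0 < γ := by
    have h := (hGpos.inv).dotProduct_mulVec_pos (x := Pi.single 2 1) (by
      intro hc
      have := congrFun hc 2
      simp [Pi.single_eq_same] at this)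
    simpa [Matrix.mulVec, dotProduct, Pi.single_apply, Fin.sum_univ_three,
      hγdef] using h
  have hγne : γ ≠ 0 := ne_of_gt hγpos
  have hγγ : γ⁻¹ * γ = 1 := inv_mul_cancel₀ hγne
  have hEGiEX : ∀ (n : Type) [Fintype n] (X : Matrix (Fin 3) n ℝ),
      Eq3 * (Gm⁻¹ * (Eq3 * X)) = γ • (Eq3 * X) := fun n _ X => by
    simp only [← Matrix.mul_assoc]
    rw [EME, ← hγdef, Matrix.smul_mul]
  have hGd : IsUnit Gm.det := hGpos.det_pos.ne'.isUnit
  have hGiG : Gm⁻¹ * Gm = 1 := Matrix.nonsing_inv_mul Gm hGd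
  have hGiGX : ∀ (n : Type) [Fintype n] (X : Matrix (Fin 3) n ℝ),
      Gm⁻¹ * (Gm * X) = X := fun n _ X => by rw [← Matrix.mul_assoc, hGiG, Matrix.one_mul]
  have hBBiX : ∀ (n : Type) [Fintype n] (X : Matrix (Fin 2) n ℝ),
      B2 * (B2⁻¹ * X) = X := fun n _ X => by rw [← Matrix.mul_assoc, hBBi, Matrix.one_mul]
  have hBiBX : ∀ (n : Type) [Fintype n] (X : Matrix (Fin 2) n ℝ),
      B2⁻¹ * (B2 * X) = X := fun n _ X => by rw [← Matrix.mul_assoc, hBiB, Matrix.one_mul]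
  -- the projection Pw and its complement Pp
  set Pw : M3 := γ⁻¹ • (A⁻¹ * (Eq3 * A⁻¹)) with hPwdef
  have hPwT : Pwᵀ = Pw := by
    rw [hPwdef]
    simp only [Matrix.transpose_smul, Matrix.transpose_mul, Eq3_transpose, hAiT,
      Matrix.mul_assoc]
  have hPwPwX : ∀ (n : Type) [Fintype n] (X : Matrix (Fin 3) n ℝ), Pw * (Pw * X) = Pw * X := by
    intro n _ X
    rw [hPwdef]
    simp only [Matrix.smul_mul, Matrix.mul_smul, Matrix.mul_assoc, smul_smul]
    rw [hAiAiX, hEGiEX, Matrix.mul_smul, smul_smul]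
    congr 1
    field_simp
  have hPwPw : Pw * Pw = Pw := by
    have := hPwPwX _ (1 : M3)
    rwa [Matrix.mul_one] at this
  set Pp : M3 := 1 - Pw with hPpdef
  have hPpT : Ppᵀ = Pp := by
    rw [hPpdef, Matrix.transpose_sub, Matrix.transpose_one, hPwT]
  have hPpPwX : ∀ (n : Type) [Fintype n] (X : Matrix (Fin 3) n ℝ), Pp * (Pw * X) = 0 := by
    intro n _ X
    rw [hPpdef, Matrix.sub_mul, Matrix.one_mul, hPwPwX, sub_self]
  have hPwPpX : ∀ (n : Type) [Fintype n] (X : Matrix (Fin 3) n ℝ), Pw * (Pp * X) = 0 := by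
    intro n _ X
    rw [hPpdef, Matrix.sub_mul, Matrix.one_mul, Matrix.mul_sub, hPwPwX, sub_self]
  have hPpPw : Pp * Pw = 0 := by
    have := hPpPwX _ (1 : M3); rwa [Matrix.mul_one] at this
  have hPwPp : Pw * Pp = 0 := by
    have := hPwPpX _ (1 : M3); rwa [Matrix.mul_one] at this
  have hPpPpX : ∀ (n : Type) [Fintype n] (X : Matrix (Fin 3) n ℝ), Pp * (Pp * X) = Pp * X := by
    intro n _ X
    nth_rewrite 1 [hPpdef]
    rw [Matrix.sub_mul, Matrix.one_mul, hPwPpX, sub_zero]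
  have hPpAiEX : ∀ (n : Type) [Fintype n] (X : Matrix (Fin 3) n ℝ),
      Pp * (A⁻¹ * (Eq3 * X)) = 0 := by
    intro n _ X
    rw [hPpdef, Matrix.sub_mul, Matrix.one_mul, hPwdef]
    simp only [Matrix.smul_mul, Matrix.mul_assoc]
    rw [hAiAiX, hEGiEX, Matrix.mul_smul, smul_smul, hγγ, one_smul, sub_self]
  have hEAiPp : Eq3 * (A⁻¹ * Pp) = 0 := by
    have h := congrArg Matrix.transpose (hPpAiEX _ (1 : M3))
    rw [Matrix.mul_one] at h
    simpa [Matrix.transpose_mul, hPpT, hAiT, Eq3_transpose, Matrix.mul_assoc] using h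
  have hPpAiE : Pp * (A⁻¹ * Eq3) = 0 := by
    have := hPpAiEX _ (1 : M3); rwa [Matrix.mul_one] at this
  -- T and K
  set T : M2 := B2⁻¹ * F2 * B2⁻¹ with hTdef
  have hTT : Tᵀ = T := by
    rw [hTdef]
    simp only [Matrix.transpose_mul, hBiT, hF2.eq, Matrix.mul_assoc]
  have hF2B : B2 * (T * B2) = F2 := by
    rw [hTdef]
    simp only [Matrix.mul_assoc]
    rw [hBiB, Matrix.mul_one, hBBiX]
  have hF2X : ∀ (n : Type) [Fintype n] (X : Matrix (Fin 2) n ℝ),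
      B2 * (T * (B2 * X)) = F2 * X := fun n _ X => by
    rw [show B2 * (T * (B2 * X)) = (B2 * (T * B2)) * X by simp only [Matrix.mul_assoc], hF2B]
  set K : M32 := Pp * (A⁻¹ * (Jq * B2)) with hKdef
  have hKt : Kᵀ = B2 * (Jqᵀ * (A⁻¹ * Pp)) := by
    rw [hKdef]
    simp only [Matrix.transpose_mul, hPpT, hAiT, hBT, Matrix.mul_assoc]
  have hPpK : Pp * K = K := by rw [hKdef]; exact hPpPpX _ _
  have hPwK : Pw * K = 0 := by rw [hKdef]; exact hPwPpX _ _
  have hPwKX : ∀ (n : Type) [Fintype n] (X : Matrix (Fin 2) n ℝ),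
      Pw * (K * X) = 0 := fun n _ X => by
    rw [← Matrix.mul_assoc, hPwK, Matrix.zero_mul]
  have hKtPw : Kᵀ * Pw = 0 := by
    have h := congrArg Matrix.transpose hPwK
    simpa [Matrix.transpose_mul, hPwT] using h
  have hKtPwX : ∀ (X : M3), Kᵀ * (Pw * X) = 0 := fun X => by
    rw [← Matrix.mul_assoc, hKtPw, Matrix.zero_mul]
  have hKtPp : Kᵀ * Pp = Kᵀ := by
    have h := congrArg Matrix.transpose hPpK
    simpa [Matrix.transpose_mul, hPpT] using h
  -- Schur complement identity : Kᵀ * K = 1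
  set Y : M2 := Jqᵀ * (Gm⁻¹ * Jq) - γ⁻¹ • (Jqᵀ * (Gm⁻¹ * (Eq3 * (Gm⁻¹ * Jq)))) with hYdef
  have hY1 : Y * (B2 * B2) = 1 := by
    rw [hBB, sub2_eq, hYdef]
    simp only [Matrix.sub_mul, Matrix.smul_mul, Matrix.mul_sub, Matrix.mul_smul,
      Matrix.mul_assoc, hJJtX, hGiGX, hEGiEX, EJ, Matrix.mul_zero, Matrix.zero_mul,
      zero_sub, Matrix.mul_neg, smul_neg, smul_smul, hγγ, one_smul, JtJ,
      Matrix.neg_mul, sub_neg_eq_add]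
    abel
  have hY2 : Kᵀ * K = B2 * (Y * B2) := by
    rw [hKt, hKdef, hYdef]
    rw [show Pp * (A⁻¹ * (Jq * B2)) = A⁻¹ * (Jq * B2) - Pw * (A⁻¹ * (Jq * B2)) by
      rw [hPpdef, Matrix.sub_mul, Matrix.one_mul]]
    rw [hPpdef, hPwdef]
    simp only [Matrix.sub_mul, Matrix.mul_sub, Matrix.smul_mul, Matrix.mul_smul,
      Matrix.one_mul, Matrix.mul_one, Matrix.mul_assoc, hAiAiX, hEGiEX, smul_sub,
      smul_smul, hγγ, one_smul]
    abel
  have hKtK : Kᵀ * K = 1 := by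
    have h1 : (Y * B2) * B2 = 1 := by rw [Matrix.mul_assoc]; exact hY1
    have h2 : B2⁻¹ = Y * B2 := Matrix.inv_eq_left_inv h1
    rw [hY2, ← h2, hBBi]
  have hKtKX : ∀ (n : Type) [Fintype n] (X : Matrix (Fin 2) n ℝ),
      Kᵀ * (K * X) = X := fun n _ X => by rw [← Matrix.mul_assoc, hKtK, Matrix.one_mul]
  have hJtAK : Jqᵀ * (A * K) = B2 := by
    rw [hKdef, hPpdef, hPwdef]
    simp only [Matrix.sub_mul, Matrix.mul_sub, Matrix.smul_mul, Matrix.mul_smul,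
      Matrix.one_mul, Matrix.mul_assoc, hAAiX, hAiAiX, hJtJX, hJtEX, smul_zero,
      sub_zero]
  have hJtAKX : ∀ (n : Type) [Fintype n] (X : Matrix (Fin 2) n ℝ),
      Jqᵀ * (A * (K * X)) = B2 * X := fun n _ X => by
    rw [show Jqᵀ * (A * (K * X)) = (Jqᵀ * (A * K)) * X by simp only [Matrix.mul_assoc],
      hJtAK]
  have hKtAJ : Kᵀ * (A * Jq) = B2 := by
    have h := congrArg Matrix.transpose hJtAK
    simpa [Matrix.transpose_mul, hAT, hBT, Matrix.mul_assoc] using h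
  have hPwAJ : Pw * (A * Jq) = 0 := by
    rw [hPwdef]
    simp only [Matrix.smul_mul, Matrix.mul_assoc, hAiAX]
    rw [EJ, Matrix.mul_zero, smul_zero]
  -- the matrix MM = K T Kᵀ
  set MM : M3 := K * (T * Kᵀ) with hMMdef
  have hMMT : MMᵀ = MM := by
    rw [hMMdef]
    simp only [Matrix.transpose_mul, Matrix.transpose_transpose, hTT, Matrix.mul_assoc]
  have hMMPw : MM * Pw = 0 := by
    rw [hMMdef]
    simp only [Matrix.mul_assoc, hKtPw, Matrix.mul_zero]
  have hPwMM : Pw * MM = 0 := by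
    rw [hMMdef, ← Matrix.mul_assoc, hPwK, Matrix.zero_mul]
  have htrMM : MM.trace = T.trace := by
    rw [hMMdef, Matrix.trace_mul_comm, Matrix.mul_assoc, hKtK, Matrix.mul_one]
  have hMMMM : MM * MM = K * (T * (T * Kᵀ)) := by
    rw [hMMdef]
    simp only [Matrix.mul_assoc, hKtKX]
  have htrMM2 : (MM * MM).trace = (T * T).trace := by
    rw [hMMMM, Matrix.trace_mul_comm,
      show (T * (T * Kᵀ)) * K = (T * T) * (Kᵀ * K) by simp only [Matrix.mul_assoc],
      hKtK, Matrix.mul_one]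
  have htrPw : Pw.trace = 1 := by
    rw [hPwdef, Matrix.trace_smul,
      show A⁻¹ * (Eq3 * A⁻¹) = (A⁻¹ * Eq3) * A⁻¹ from (Matrix.mul_assoc _ _ _).symm,
      Matrix.trace_mul_comm, ← Matrix.mul_assoc, hGi, trace_mul_E, smul_eq_mul, ← hγdef]
    exact hγγ
  have hMM2 : MM = Pp * (A⁻¹ * (Jq * (F2 * (Jqᵀ * (A⁻¹ * Pp))))) := by
    rw [hMMdef, hKt, hKdef]
    simp only [Matrix.mul_assoc, hF2X]
  have hTnorm : ‖T‖^2 = (T * T).trace := by rw [frob_sq_s8, hTT]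
  -- lower bound
  have hlb : ∀ Ft : M3, sub2 Ft = F2 →
      mu * ‖T‖^2 + la * mu / (la + mu) * T.trace^2 ≤ Q3 W (A⁻¹ * Ft * A⁻¹) := by
    intro Ft hFt
    rw [hQ3]
    set S : M3 := symM Ft with hSdef
    have hST : Sᵀ = S := by
      rw [hSdef]
      simp only [symM, Matrix.transpose_smul, Matrix.transpose_add,
        Matrix.transpose_transpose]
      rw [add_comm]
    have e1L : Jqᵀ * Ft * Jq = F2 := by rw [← sub2_eq, hFt]
    have e2L : Jqᵀ * Ftᵀ * Jq = F2 := by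
      have h := congrArg Matrix.transpose e1L
      rw [hF2.eq] at h
      rw [← h]
      simp only [Matrix.transpose_mul, Matrix.transpose_transpose, Matrix.mul_assoc]
    have hsub2S : Jqᵀ * S * Jq = F2 := by
      rw [hSdef]
      simp only [symM, Matrix.smul_mul, Matrix.mul_smul, Matrix.add_mul, Matrix.mul_add]
      rw [e1L, e2L, ← two_smul ℝ F2, smul_smul]
      norm_num
    set Ns : M3 := A⁻¹ * (S * A⁻¹) with hNsdef
    have hsymN : symM (A⁻¹ * Ft * A⁻¹) = Ns := by
      rw [hNsdef, hSdef]
      simp only [symM, Matrix.transpose_mul, hAiT, Matrix.smul_mul, Matrix.mul_smul,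
        Matrix.add_mul, Matrix.mul_add, Matrix.mul_assoc, smul_add]
    have hNsT : Nsᵀ = Ns := by
      rw [hNsdef]
      simp only [Matrix.transpose_mul, hAiT, hST, Matrix.mul_assoc]
    have htrN : Ns.trace = (A⁻¹ * Ft * A⁻¹).trace := by
      rw [← hsymN]
      simp only [symM, Matrix.trace_smul, Matrix.trace_add, Matrix.trace_transpose,
        smul_eq_mul]
      ring
    set b : ℝ := (Ns * Pw).trace with hbdef
    set C : M3 := Pp * (Ns * Pw) with hCdef
    have hCt : Cᵀ = Pw * (Ns * Pp) := by
      rw [hCdef]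
      simp only [Matrix.transpose_mul, hPwT, hPpT, hNsT, Matrix.mul_assoc]
    have hPwNsPw : Pw * (Ns * Pw) = b • Pw := by
      have h1 : Pw * (Ns * Pw)
          = (γ⁻¹ * γ⁻¹) • (A⁻¹ * ((Eq3 * (A⁻¹ * Ns * A⁻¹) * Eq3) * A⁻¹)) := by
        rw [hPwdef]
        simp only [Matrix.smul_mul, Matrix.mul_smul, smul_smul, Matrix.mul_assoc]
      have hb1 : b = γ⁻¹ * ((A⁻¹ * Ns * A⁻¹) 2 2) := by
        rw [hbdef, hPwdef, Matrix.mul_smul, Matrix.trace_smul, smul_eq_mul]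
        congr 1
        rw [show Ns * (A⁻¹ * (Eq3 * A⁻¹)) = (Ns * A⁻¹ * Eq3) * A⁻¹ by
            simp only [Matrix.mul_assoc],
          Matrix.trace_mul_comm,
          show A⁻¹ * (Ns * A⁻¹ * Eq3) = (A⁻¹ * Ns * A⁻¹) * Eq3 by
            simp only [Matrix.mul_assoc],
          trace_mul_E]
      rw [h1, EME, hb1, hPwdef]
      simp only [Matrix.smul_mul, Matrix.mul_smul, smul_smul]
      congr 1
      ring
    have hPpNsPp : Pp * (Ns * Pp) = MM := by
      have hXr : Jqᵀ * (S - ext2 F2) * Jq = 0 := by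
        rw [Matrix.mul_sub, Matrix.sub_mul, hsub2S, ← sub2_eq, sub2_ext2, sub_self]
      have hXdec := decompX _ hXr
      rw [hMM2, hNsdef,
        show (A⁻¹ * (S * A⁻¹)) * Pp = A⁻¹ * (S * (A⁻¹ * Pp)) by
          simp only [Matrix.mul_assoc]]
      nth_rewrite 1 [show S = Jq * F2 * Jqᵀ + (S - ext2 F2) by rw [← ext2_eq]; abel]
      rw [hXdec]
      simp only [Matrix.mul_add, Matrix.add_mul, Matrix.mul_sub, Matrix.sub_mul,
        Matrix.smul_mul, Matrix.mul_smul, Matrix.mul_assoc, hPpAiEX, hEAiPp,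
        Matrix.mul_zero, Matrix.zero_mul, smul_zero, add_zero, zero_add, sub_zero]
    have h1p : Pp + Pw = 1 := by rw [hPpdef]; abel
    have hdecomp : Ns = MM + C + Cᵀ + b • Pw := by
      have e0 : Ns = (Pp + Pw) * (Ns * (Pp + Pw)) := by
        rw [h1p, Matrix.one_mul, Matrix.mul_one]
      rw [hCt, ← hPwNsPw, ← hPpNsPp, hCdef]
      conv_lhs => rw [e0]
      simp only [Matrix.mul_add, Matrix.add_mul]
      abel
    have zCMM : C * MM = 0 := by
      rw [hCdef, hMMdef]
      simp only [Matrix.mul_assoc, hPwKX, Matrix.mul_zero]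
    have zMMCt : MM * Cᵀ = 0 := by
      rw [hCt, hMMdef]
      simp only [Matrix.mul_assoc, hKtPwX, Matrix.mul_zero]
    have zCC : C * C = 0 := by
      rw [hCdef]
      simp only [Matrix.mul_assoc, hPwPpX, Matrix.mul_zero]
    have zCtCt : Cᵀ * Cᵀ = 0 := by
      rw [hCt]
      simp only [Matrix.mul_assoc, hPpPwX, Matrix.mul_zero]
    have zCtPw : Cᵀ * Pw = 0 := by
      rw [hCt]
      simp only [Matrix.mul_assoc, hPpPw, Matrix.mul_zero]
    have zPwC : Pw * C = 0 := by rw [hCdef]; exact hPwPpX _ _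
    have eCPw : C * Pw = C := by
      rw [hCdef]
      simp only [Matrix.mul_assoc, hPwPw]
    have ePwCt : Pw * Cᵀ = Cᵀ := by rw [hCt]; exact hPwPwX _ _
    have trC : C.trace = 0 := by
      rw [hCdef, Matrix.trace_mul_comm, Matrix.mul_assoc, hPwPp, Matrix.mul_zero,
        Matrix.trace_zero]
    have trCt : Cᵀ.trace = 0 := by rw [Matrix.trace_transpose, trC]
    have tMMC : (MM * C).trace = 0 := by
      rw [Matrix.trace_mul_comm, zCMM, Matrix.trace_zero]
    have tCtMM : (Cᵀ * MM).trace = 0 := by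
      rw [Matrix.trace_mul_comm, zMMCt, Matrix.trace_zero]
    have tCCt : (C * Cᵀ).trace = ‖C‖^2 := by
      rw [Matrix.trace_mul_comm, ← frob_sq_s8]
    have tCtC : (Cᵀ * C).trace = ‖C‖^2 := (frob_sq_s8 C).symm
    have tPwPw : (Pw * Pw).trace = 1 := by rw [hPwPw, htrPw]
    have tCPw : (C * Pw).trace = 0 := by rw [eCPw, trC]
    have tPwC : (Pw * C).trace = 0 := by rw [zPwC, Matrix.trace_zero]
    have tCtPw : (Cᵀ * Pw).trace = 0 := by rw [zCtPw, Matrix.trace_zero]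
    have tPwCt : (Pw * Cᵀ).trace = 0 := by rw [ePwCt, trCt]
    have tMMPw : (MM * Pw).trace = 0 := by rw [hMMPw, Matrix.trace_zero]
    have tPwMM : (Pw * MM).trace = 0 := by rw [hPwMM, Matrix.trace_zero]
    have tCMM : (C * MM).trace = 0 := by rw [zCMM, Matrix.trace_zero]
    have tMMCt : (MM * Cᵀ).trace = 0 := by rw [zMMCt, Matrix.trace_zero]
    have tCC : (C * C).trace = 0 := by rw [zCC, Matrix.trace_zero]
    have tCtCt : (Cᵀ * Cᵀ).trace = 0 := by rw [zCtCt, Matrix.trace_zero]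
    have htrNs2 : (Ns * Ns).trace = (T * T).trace + 2 * ‖C‖^2 + b^2 := by
      conv_lhs => rw [hdecomp]
      simp only [Matrix.mul_add, Matrix.add_mul, Matrix.smul_mul, Matrix.mul_smul,
        Matrix.trace_add, Matrix.trace_smul, smul_smul, smul_eq_mul]
      rw [htrMM2, tMMC, tMMCt, tMMPw, tCMM, tCC, tCCt, tCPw, tCtMM, tCtC, tCtCt,
        tCtPw, tPwMM, tPwC, tPwCt, tPwPw]
      ring
    have htrNs : Ns.trace = T.trace + b := by
      conv_lhs => rw [hdecomp]
      simp only [Matrix.trace_add, Matrix.trace_smul, smul_eq_mul]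
      rw [htrMM, trC, trCt, htrPw]
      ring
    have hNs2 : ‖Ns‖^2 = (Ns * Ns).trace := by rw [frob_sq_s8, hNsT]
    rw [hsymN, ← htrN, hNs2, htrNs2, htrNs, hTnorm]
    have hC2 : (0:ℝ) ≤ ‖C‖^2 := sq_nonneg _
    have key : la * mu / (la + mu) * T.trace^2 ≤ mu * b^2 + la * (T.trace + b)^2 := by
      rw [div_mul_eq_mul_div, div_le_iff₀ hlamu]
      nlinarith [sq_nonneg (mu * b + la * (b + T.trace))]
    nlinarith [key, mul_nonneg hmu.le hC2]
  -- attainment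
  set cc : ℝ := -(la * T.trace) / (la + mu) with hccdef
  set Fts : M3 := A * ((MM + cc • Pw) * A) with hFtsdef
  have hsub2Fts : sub2 Fts = F2 := by
    rw [sub2_eq, hFtsdef, hMMdef]
    simp only [Matrix.add_mul, Matrix.mul_add, Matrix.smul_mul, Matrix.mul_smul,
      Matrix.mul_assoc, hKtAJ, hJtAKX, hPwAJ, Matrix.mul_zero, smul_zero, add_zero]
    exact hF2B
  have hNstar : A⁻¹ * Fts * A⁻¹ = MM + cc • Pw := by
    rw [hFtsdef]
    simp only [Matrix.mul_assoc, hAAi, Matrix.mul_one, hAiAX]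
  have hNstarT : (MM + cc • Pw)ᵀ = MM + cc • Pw := by
    rw [Matrix.transpose_add, Matrix.transpose_smul, hMMT, hPwT]
  have hsymNstar : symM (A⁻¹ * Fts * A⁻¹) = MM + cc • Pw := by
    rw [hNstar]
    simp only [symM, hNstarT]
    rw [← two_smul ℝ (MM + cc • Pw), smul_smul]
    norm_num
  have hval : Q3 W (A⁻¹ * Fts * A⁻¹)
      = mu * ‖T‖^2 + la * mu / (la + mu) * T.trace^2 := by
    rw [hQ3, hsymNstar]
    have htr : (A⁻¹ * Fts * A⁻¹).trace = T.trace + cc := by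
      rw [hNstar, Matrix.trace_add, Matrix.trace_smul, htrMM, htrPw, smul_eq_mul,
        mul_one]
    have hnorm : ‖MM + cc • Pw‖^2 = (T * T).trace + cc^2 := by
      rw [frob_sq_s8, hNstarT]
      simp only [Matrix.mul_add, Matrix.add_mul, Matrix.smul_mul, Matrix.mul_smul,
        Matrix.trace_add, Matrix.trace_smul, smul_smul, smul_eq_mul]
      rw [htrMM2, hMMPw, hPwMM, hPwPw, Matrix.trace_zero, htrPw]
      ring
    rw [htr, hnorm, hTnorm, hccdef]
    field_simp
    ring
  -- conclusion
  have hmain : Q2 W A F2 = mu * ‖T‖^2 + la * mu / (la + mu) * T.trace^2 := by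
    have hQ2eq : Q2 W A F2
        = sInf {q | ∃ Ft : M3, sub2 Ft = F2 ∧ q = Q3 W (A⁻¹ * Ft * A⁻¹)} := rfl
    have hmem : mu * ‖T‖^2 + la * mu / (la + mu) * T.trace^2
        ∈ {q | ∃ Ft : M3, sub2 Ft = F2 ∧ q = Q3 W (A⁻¹ * Ft * A⁻¹)} :=
      ⟨Fts, hsub2Fts, hval.symm⟩
    have hbdd : BddBelow {q | ∃ Ft : M3, sub2 Ft = F2 ∧ q = Q3 W (A⁻¹ * Ft * A⁻¹)} :=
      ⟨_, fun q hq => by obtain ⟨Ft, h1, rfl⟩ := hq; exact hlb Ft h1⟩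
    rw [hQ2eq]
    refine le_antisymm (csInf_le hbdd hmem) (le_csInf ⟨_, hmem⟩ ?_)
    rintro q ⟨Ft, h1, rfl⟩
    exact hlb Ft h1
  have hs2 : symM2 T = T := by
    simp only [symM2, hTT]
    rw [← two_smul ℝ T, smul_smul]
    norm_num
  constructor
  · exact hmain
  · rw [hmain]
    unfold Q2iso
    rw [hs2]
end
end
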